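/- Let k be a field of characteristic p > 0, c₁,…,c_n ∈ k, and v(h) = ∏_{i=1}^n (h−c_i). Then in the generalized Weyl algebra A(v) one has xᵖ·yᵖ = ∏_{i=1}^n ((hᵖ−h) − (c_iᵖ − c_i)). -/

import Mathlib

open Polynomial

/-- The defining relations of the generalized Weyl algebra `A(v)`:
generators `x = ι 0`, `y = ι 1`, `h = ι 2`, relations
`[h,x] = x`, `[h,y] = -y`, `x*y = v(h)`, `y*x = v(h-1)`. -/
inductive GWARel (k : Type*) [Field k] (v : Polynomial k) :
    FreeAlgebra k (Fin 3) → FreeAlgebra k (Fin 3) → Prop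
  | hx : GWARel k v
      (FreeAlgebra.ι k (2 : Fin 3) * FreeAlgebra.ι k (0 : Fin 3) -
        FreeAlgebra.ι k (0 : Fin 3) * FreeAlgebra.ι k (2 : Fin 3))
      (FreeAlgebra.ι k (0 : Fin 3))
  | hy : GWARel k v
      (FreeAlgebra.ι k (2 : Fin 3) * FreeAlgebra.ι k (1 : Fin 3) -
        FreeAlgebra.ι k (1 : Fin 3) * FreeAlgebra.ι k (2 : Fin 3))
      (-(FreeAlgebra.ι k (1 : Fin 3)))
  | xy : GWARel k v
      (FreeAlgebra.ι k (0 : Fin 3) * FreeAlgebra.ι k (1 : Fin 3))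
      (Polynomial.aeval (FreeAlgebra.ι k (2 : Fin 3)) v)
  | yx : GWARel k v
      (FreeAlgebra.ι k (1 : Fin 3) * FreeAlgebra.ι k (0 : Fin 3))
      (Polynomial.aeval (FreeAlgebra.ι k (2 : Fin 3) - 1) v)

/-- The generalized Weyl algebra `A(v)`. -/
abbrev GWA (k : Type*) [Field k] (v : Polynomial k) := RingQuot (GWARel k v)

variable (k : Type*) [Field k] (v : Polynomial k)

/-- The generator `x` of `A(v)`. -/
noncomputable def GWA.x : GWA k v :=
  RingQuot.mkAlgHom k (GWARel k v) (FreeAlgebra.ι k (0 : Fin 3))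

/-- The generator `y` of `A(v)`. -/
noncomputable def GWA.y : GWA k v :=
  RingQuot.mkAlgHom k (GWARel k v) (FreeAlgebra.ι k (1 : Fin 3))

/-- The generator `h` of `A(v)`. -/
noncomputable def GWA.h : GWA k v :=
  RingQuot.mkAlgHom k (GWARel k v) (FreeAlgebra.ι k (2 : Fin 3))


lemma monic_X_pow_sub_X {R : Type*} [CommRing R] [Nontrivial R] {p : ℕ} (h2 : 2 ≤ p) :
    (X ^ p - X : R[X]).Monic := by
  obtain ⟨m, rfl⟩ : ∃ m, p = m + 2 := ⟨p - 2, by omega⟩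
  exact monic_X_pow_sub (by rw [degree_X]; exact_mod_cast Nat.lt_add_of_pos_left (Nat.succ_pos m))

lemma zmod_prod_key (p : ℕ) [hp : Fact p.Prime] :
    (∏ a : ZMod p, (X - C a)) = X ^ p - X := by
  have hq : Fintype.card (ZMod p) = p := ZMod.card p
  have hmonic : (X ^ p - X : (ZMod p)[X]).Monic := monic_X_pow_sub_X hp.out.two_le
  have hroots : (X ^ p - X : (ZMod p)[X]).roots = Finset.univ.val := by
    have := FiniteField.roots_X_pow_card_sub_X (ZMod p)
    rwa [hq] at this
  have hdeg : (X ^ p - X : (ZMod p)[X]).natDegree = p :=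
    FiniteField.X_pow_card_sub_X_natDegree_eq (ZMod p) hp.out.one_lt
  have hcard : Multiset.card (X ^ p - X : (ZMod p)[X]).roots
      = (X ^ p - X : (ZMod p)[X]).natDegree := by
    rw [hroots, hdeg]
    show Finset.univ.card = p
    rw [Finset.card_univ, hq]
  have := C_leadingCoeff_mul_prod_multiset_X_sub_C hcard
  rw [hmonic.leadingCoeff, map_one, one_mul, hroots] at this
  rw [← this]
  rfl

lemma range_prod_key (k : Type*) [Field k] (p : ℕ) [hp : Fact p.Prime] [CharP k p] :
    (∏ j ∈ Finset.range p, (X - C ((j : k)))) = X ^ p - X := by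
  haveI : NeZero p := ⟨hp.out.ne_zero⟩
  let f : ZMod p →+* k := ZMod.castHom (dvd_refl p) k
  have h1 : Polynomial.map f (∏ a : ZMod p, (X - C a)) = ∏ a : ZMod p, (X - C (f a)) := by
    rw [← coe_mapRingHom, map_prod]
    simp
  have h2 : (∏ a : ZMod p, (X - C (f a))) = ∏ j ∈ Finset.range p, (X - C ((j : k))) := by
    refine Finset.prod_bij' (fun a _ => a.val) (fun j _ => (j : ZMod p)) ?_ ?_ ?_ ?_ ?_
    · intro a _; exact Finset.mem_range.mpr (ZMod.val_lt a)
    · intro j _; exact Finset.mem_univ _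
    · intro a _; exact ZMod.natCast_rightInverse a
    · intro j hj; exact ZMod.val_natCast_of_lt (Finset.mem_range.mp hj)
    · intro a _
      congr 1
      simp only [f, ZMod.natCast_val, ZMod.castHom_apply]
  rw [← h2, ← h1, zmod_prod_key]
  simp

/-- aeval at h -/
noncomputable def gwaPhi : Polynomial k →ₐ[k] GWA k v :=
  Polynomial.aeval (GWA.h k v)

lemma gwa_xy : GWA.x k v * GWA.y k v = gwaPhi k v v := by
  have := RingQuot.mkAlgHom_rel k (GWARel.xy (k := k) (v := v))
  rw [map_mul, ← Polynomial.aeval_algHom_apply] at this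
  exact this

lemma gwa_hy : GWA.h k v * GWA.y k v = GWA.y k v * (GWA.h k v - 1) := by
  have h1 := RingQuot.mkAlgHom_rel k (GWARel.hy (k := k) (v := v))
  rw [map_sub, map_mul, map_mul, map_neg] at h1
  have : GWA.h k v * GWA.y k v - GWA.y k v * GWA.h k v = -(GWA.y k v) := h1
  have e : GWA.h k v * GWA.y k v =
      (GWA.h k v * GWA.y k v - GWA.y k v * GWA.h k v) + GWA.y k v * GWA.h k v := by abel
  rw [e, this, mul_sub, mul_one]
  abel

lemma gwa_hpow_y (m : ℕ) :
    GWA.h k v ^ m * GWA.y k v = GWA.y k v * (GWA.h k v - 1) ^ m := by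
  induction m with
  | zero => simp
  | succ m ih =>
    rw [pow_succ, mul_assoc, gwa_hy, ← mul_assoc, ih, mul_assoc, ← pow_succ]

lemma gwa_phi_y (f : Polynomial k) :
    gwaPhi k v f * GWA.y k v = GWA.y k v * gwaPhi k v (f.comp (X - 1)) := by
  induction f using Polynomial.induction_on' with
  | add p q hp hq =>
    rw [map_add, add_mul, hp, hq, Polynomial.add_comp, map_add, mul_add]
  | monomial m a =>
    rw [← Polynomial.C_mul_X_pow_eq_monomial]
    simp only [gwaPhi, map_mul, map_pow, Polynomial.aeval_C, Polynomial.aeval_X,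
      Polynomial.mul_comp, Polynomial.C_comp, Polynomial.pow_comp, Polynomial.X_comp,
      Polynomial.sub_comp, Polynomial.one_comp, map_sub, map_one]
    rw [mul_assoc, gwa_hpow_y, ← mul_assoc, Algebra.commutes a (GWA.y k v), mul_assoc]

lemma gwa_phi_ypow (m : ℕ) (f : Polynomial k) :
    gwaPhi k v f * GWA.y k v ^ m = GWA.y k v ^ m * gwaPhi k v (f.comp (X - C (m : k))) := by
  induction m generalizing f with
  | zero => simp
  | succ m ih =>
    have hcomp : (f.comp (X - 1)).comp (X - C (m : k)) = f.comp (X - C ((m + 1 : ℕ) : k)) := by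
      rw [Polynomial.comp_assoc]
      congr 1
      push_cast
      rw [Polynomial.sub_comp, Polynomial.X_comp, Polynomial.one_comp, map_add, map_one]
      ring
    rw [pow_succ', ← mul_assoc, gwa_phi_y, mul_assoc, ih, hcomp, ← mul_assoc, ← pow_succ']

lemma gwa_xpow_ypow (m : ℕ) :
    GWA.x k v ^ m * GWA.y k v ^ m =
      gwaPhi k v (∏ j ∈ Finset.range m, v.comp (X - C ((j : k)))) := by
  induction m with
  | zero => simp
  | succ m ih =>
    have : GWA.x k v ^ (m + 1) * GWA.y k v ^ (m + 1) =
        GWA.x k v ^ m * ((GWA.x k v * GWA.y k v) * GWA.y k v ^ m) := by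
      rw [pow_succ, pow_succ']
      noncomm_ring
    rw [this, gwa_xy, gwa_phi_ypow, ← mul_assoc, ih, ← map_mul,
      ← Finset.prod_range_succ]

/-- If `char k = p > 0` and `v = ∏ (h - cᵢ)`, then in `A(v)` one has
`x^p * y^p = ∏ᵢ ((h^p - h) - (cᵢ^p - cᵢ))`. -/
theorem gwa_xp_mul_yp (p : ℕ) [hp : Fact p.Prime] [CharP k p]
    (n : ℕ) (c : Fin n → k)
    (hv : v = ∏ i, (Polynomial.X - Polynomial.C (c i))) :
    GWA.x k v ^ p * GWA.y k v ^ p =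
      (List.ofFn (fun i : Fin n => (GWA.h k v ^ p - GWA.h k v) -
        algebraMap k (GWA k v) (c i ^ p - c i))).prod := by
  haveI : CharP (Polynomial k) p := charP_of_injective_algebraMap' (A := Polynomial k) k p
  have hpoly : (∏ j ∈ Finset.range p, v.comp (X - C ((j : k)))) =
      ∏ i, ((X : k[X]) ^ p - X - C (c i ^ p - c i)) := by
    rw [hv]
    calc ∏ j ∈ Finset.range p, (∏ i, (X - C (c i))).comp (X - C ((j : k)))
        = ∏ j ∈ Finset.range p, ∏ i, ((X : k[X]) - C ((j : k)) - C (c i)) := by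
          refine Finset.prod_congr rfl fun j _ => ?_
          rw [Polynomial.prod_comp]
          refine Finset.prod_congr rfl fun i _ => ?_
          rw [Polynomial.sub_comp, Polynomial.X_comp, Polynomial.C_comp]
      _ = ∏ i, ∏ j ∈ Finset.range p, ((X : k[X]) - C ((j : k)) - C (c i)) :=
          Finset.prod_comm
      _ = ∏ i, ((X : k[X]) ^ p - X - C (c i ^ p - c i)) := by
          refine Finset.prod_congr rfl fun i _ => ?_
          have h1 : ∏ j ∈ Finset.range p, ((X : k[X]) - C ((j : k)) - C (c i))
              = (∏ j ∈ Finset.range p, ((X : k[X]) - C ((j : k)))).comp (X - C (c i)) := by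
            rw [Polynomial.prod_comp]
            refine Finset.prod_congr rfl fun j _ => ?_
            rw [Polynomial.sub_comp, Polynomial.X_comp, Polynomial.C_comp]
            ring
          rw [h1, range_prod_key, Polynomial.sub_comp, Polynomial.pow_comp,
            Polynomial.X_comp, sub_pow_char, ← map_pow, map_sub]
          ring
  have hg : ∀ i : Fin n, gwaPhi k v ((X : k[X]) ^ p - X - C (c i ^ p - c i)) =
      (GWA.h k v ^ p - GWA.h k v) - algebraMap k (GWA k v) (c i ^ p - c i) := by
    intro i
    simp [gwaPhi]
  calc GWA.x k v ^ p * GWA.y k v ^ p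
      = gwaPhi k v (∏ j ∈ Finset.range p, v.comp (X - C ((j : k)))) := gwa_xpow_ypow k v p
    _ = gwaPhi k v ((List.ofFn fun i : Fin n =>
          ((X : k[X]) ^ p - X - C (c i ^ p - c i))).prod) := by
        rw [hpoly, List.prod_ofFn]
    _ = ((List.ofFn fun i : Fin n =>
          ((X : k[X]) ^ p - X - C (c i ^ p - c i))).map (gwaPhi k v)).prod :=
        map_list_prod _ _
    _ = _ := by
        rw [List.map_ofFn]
        refine congrArg List.prod (congrArg List.ofFn (funext fun i => ?_))
        simpa using hg i
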